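/- arXiv:2008.03047 — 2 statements merged into one kernel-verified Lean document; each statement's English description precedes it below -/
import Mathlib

section
/- Let μ₀ be a symmetric positive definite 3×3 matrix, η⁰ symmetric positive definite 3×3, ν̲ > 0, and θ ∈ S². Define S(θ) = μ₀^{-1/2} r(θ)ᵗ (η⁰)⁻¹ r(θ) μ₀^{-1/2} + ν̲ · μ₀^{1/2} θθᵗ μ₀^{1/2} on ℂ³. Then S(θ) is reduced by the orthogonal decomposition ℂ³ = J⁰_θ ⊕ G⁰_θ, where G⁰_θ = span{μ₀^{1/2}θ} and J⁰_θ = {μ₀^{1/2}c : ⟨μ₀c, θ⟩ = 0}: S(θ) maps each subspace into itself. -/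
open Matrix

/-- The cross-product matrix `r(θ)`, satisfying `r(θ) v = θ × v`. -/
def crossMatrix (θ : Fin 3 → ℝ) : Matrix (Fin 3) (Fin 3) ℝ :=
  !![0, -θ 2, θ 1; θ 2, 0, -θ 0; -θ 1, θ 0, 0]

private lemma mapC_mulVec (A : Matrix (Fin 3) (Fin 3) ℝ) (x : Fin 3 → ℝ) :
    (A.map Complex.ofReal) *ᵥ (fun i => (x i : ℂ)) = fun i => ((A *ᵥ x) i : ℂ) := by
  funext i
  exact (RingHom.map_mulVec Complex.ofRealHom A x i).symm

private lemma mapC_vecMul (A : Matrix (Fin 3) (Fin 3) ℝ) (x : Fin 3 → ℝ) :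
    (fun i => (x i : ℂ)) ᵥ* (A.map Complex.ofReal) = fun i => ((x ᵥ* A) i : ℂ) := by
  funext i
  exact (RingHom.map_vecMul Complex.ofRealHom A x i).symm

private lemma mapC_mul (A B : Matrix (Fin 3) (Fin 3) ℝ) :
    (A * B).map Complex.ofReal = A.map Complex.ofReal * B.map Complex.ofReal :=
  Matrix.map_mul (f := Complex.ofRealHom)

private lemma cV_smul (k : ℝ) (x : Fin 3 → ℝ) :
    (fun i => ((k • x) i : ℂ)) = (k : ℂ) • fun i => (x i : ℂ) := by
  funext i; simp

private lemma crossMatrix_mulVec_self (θ : Fin 3 → ℝ) : crossMatrix θ *ᵥ θ = 0 := by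
  funext i
  fin_cases i <;> simp [crossMatrix, mulVec, dotProduct, Fin.sum_univ_three] <;> ring

private lemma vecMulVec_mulVec' (θ x : Fin 3 → ℝ) :
    vecMulVec θ θ *ᵥ x = (θ ⬝ᵥ x) • θ := by
  funext i
  simp [vecMulVec, mulVec, dotProduct, Fin.sum_univ_three]
  ring

/-- the spectral germ
`S(θ) = μ₀^{-1/2} r(θ)ᵗ (η⁰)⁻¹ r(θ) μ₀^{-1/2} + ν̲ μ₀^{1/2} θθᵗ μ₀^{1/2}`
(acting ℂ-linearly on ℂ³) is reduced by the orthogonal decomposition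
`ℂ³ = J⁰_θ ⊕ G⁰_θ`, where `G⁰_θ = span{μ₀^{1/2}θ}` and
`J⁰_θ = {μ₀^{1/2} c : ⟨μ₀ c, θ⟩ = 0}`: it maps each subspace into itself.
Here `s = μ₀^{1/2}` is the positive square root of `μ₀`. -/
theorem germ_reduced_by_weyl_decomposition
    (μ₀ s η₀ : Matrix (Fin 3) (Fin 3) ℝ)
    (hμ₀ : μ₀.PosDef) (hμ₀symm : μ₀.IsSymm)
    (hs : s.PosDef) (hssymm : s.IsSymm) (hsq : s * s = μ₀)
    (hη₀ : η₀.PosDef) (hη₀symm : η₀.IsSymm)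
    (ν : ℝ) (hν : 0 < ν)
    (θ : Fin 3 → ℝ) (hθ : ∑ i, θ i ^ 2 = 1) :
    let S : Matrix (Fin 3) (Fin 3) ℝ :=
      s⁻¹ * (crossMatrix θ)ᵀ * η₀⁻¹ * crossMatrix θ * s⁻¹
        + ν • (s * vecMulVec θ θ * s);
    let SC : Matrix (Fin 3) (Fin 3) ℂ := S.map Complex.ofReal;
    let J : Set (Fin 3 → ℂ) :=
      {v | ∃ c : Fin 3 → ℂ, v = (s.map Complex.ofReal) *ᵥ c
        ∧ ((μ₀.map Complex.ofReal) *ᵥ c) ⬝ᵥ (fun i => (θ i : ℂ)) = 0};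
    let G : Set (Fin 3 → ℂ) :=
      {v | ∃ a : ℂ, v = a • fun i => ((s *ᵥ θ) i : ℂ)};
    Set.MapsTo (fun v => SC *ᵥ v) J J ∧ Set.MapsTo (fun v => SC *ᵥ v) G G := by
  intro S SC J G
  set R := crossMatrix θ with hR
  have hsdet : IsUnit s.det := hs.det_pos.ne'.isUnit
  have hμdet : IsUnit μ₀.det := hμ₀.det_pos.ne'.isUnit
  have hinv : s⁻¹ * s = 1 := nonsing_inv_mul s hsdet
  have hsinv : s * μ₀⁻¹ = s⁻¹ := by
    rw [← hsq, Matrix.mul_inv_rev, ← mul_assoc, mul_nonsing_inv s hsdet, one_mul]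
  set M : Matrix (Fin 3) (Fin 3) ℝ :=
    μ₀⁻¹ * Rᵀ * η₀⁻¹ * R + ν • (vecMulVec θ θ * μ₀) with hM
  set k : ℝ := ν * (θ ⬝ᵥ (μ₀ *ᵥ θ)) with hk
  have hSs : S * s = s * M := by
    have h1 : s⁻¹ * Rᵀ * η₀⁻¹ * R * s⁻¹ * s = s * (μ₀⁻¹ * Rᵀ * η₀⁻¹ * R) := by
      rw [mul_assoc _ s⁻¹ s, hinv, mul_one, ← hsinv]
      simp only [mul_assoc]
    have h2 : s * vecMulVec θ θ * s * s = s * (vecMulVec θ θ * μ₀) := by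
      rw [mul_assoc (s * vecMulVec θ θ) s s, hsq, mul_assoc]
    simp only [S, ← hR, hM, add_mul, mul_add, smul_mul_assoc, mul_smul_comm, h1, h2]
  have hMθ : M *ᵥ θ = k • θ := by
    rw [hM, add_mulVec, ← mulVec_mulVec, crossMatrix_mulVec_self, mulVec_zero, zero_add,
      smul_mulVec, ← mulVec_mulVec, vecMulVec_mulVec', smul_smul]
  have hμM : μ₀ * M = Rᵀ * η₀⁻¹ * R + ν • (μ₀ * vecMulVec θ θ * μ₀) := by
    rw [hM, mul_add, mul_smul_comm]
    congr 1
    · simp only [mul_assoc]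
      rw [mul_nonsing_inv_cancel_left _ _ hμdet]
    · simp only [mul_assoc]
  have hvvsymm : (vecMulVec θ θ)ᵀ = vecMulVec θ θ := by
    funext i j; simp [vecMulVec, transpose_apply, mul_comm]
  have hμMsymm : (μ₀ * M)ᵀ = μ₀ * M := by
    rw [hμM, transpose_add, transpose_smul]
    congr 1
    · rw [transpose_mul, transpose_mul, transpose_transpose, transpose_nonsing_inv,
        hη₀symm.eq, mul_assoc]
    · rw [transpose_mul, transpose_mul, hvvsymm, hμ₀symm.eq, mul_assoc]
  have hμMθ : (μ₀ * M) *ᵥ θ = k • (μ₀ *ᵥ θ) := by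
    rw [← mulVec_mulVec, hMθ, mulVec_smul]
  -- complexified matrices
  have hSCs : SC * s.map Complex.ofReal = s.map Complex.ofReal * M.map Complex.ofReal := by
    show S.map Complex.ofReal * s.map Complex.ofReal = _
    rw [← mapC_mul, hSs, mapC_mul]
  -- the dot product of the image against θ, for the J-part
  have hdot : ∀ c : Fin 3 → ℂ,
      ((μ₀.map Complex.ofReal) *ᵥ c) ⬝ᵥ (fun i => (θ i : ℂ))
        = (fun i => ((μ₀ *ᵥ θ) i : ℂ)) ⬝ᵥ c := by
    intro c
    rw [dotProduct_comm, dotProduct_mulVec, mapC_vecMul]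
    congr 1
    funext i
    rw [← mulVec_transpose, hμ₀symm.eq]
  constructor
  · rintro v ⟨c, rfl, hc0⟩
    refine ⟨(M.map Complex.ofReal) *ᵥ c, ?_, ?_⟩
    · simp only [mulVec_mulVec, hSCs]
    · rw [mulVec_mulVec, ← mapC_mul, dotProduct_comm, dotProduct_mulVec, mapC_vecMul]
      have hrow : (fun i => ((θ ᵥ* (μ₀ * M)) i : ℂ)) = (k : ℂ) • fun i => ((μ₀ *ᵥ θ) i : ℂ) := by
        rw [← cV_smul]
        congr 1
        funext i
        rw [← mulVec_transpose, hμMsymm, hμMθ]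
      rw [hrow, smul_dotProduct]
      rw [hdot] at hc0
      rw [hc0, smul_zero]
  · rintro v ⟨a, rfl⟩
    refine ⟨a * (k : ℂ), ?_⟩
    have h1 : SC *ᵥ (fun i => ((s *ᵥ θ) i : ℂ)) = (k : ℂ) • fun i => ((s *ᵥ θ) i : ℂ) := by
      rw [← mapC_mulVec s θ, mulVec_mulVec, hSCs, ← mulVec_mulVec, mapC_mulVec M θ,
        hMθ, cV_smul, mulVec_smul]
    simp only [mulVec_smul, h1, smul_smul, mul_comm]
end

section
/- Let μ₀ be a symmetric positive definite real 3×3 matrix and θ₀ ∈ S². The matrix μ₀^{-1/2} r(θ₀) μ₀^{-1/2}, restricted to the 2-dimensional subspace J⁰_{θ₀} = {μ₀^{1/2}c : ⟨μ₀c, θ₀⟩ = 0}, has eigenvalues ± i ⟨μ₀θ₀, θ₀⟩^{1/2} / (det μ₀)^{1/2}. -/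
open Matrix

lemma crossdot (θ : Fin 3 → ℝ) (w : Fin 3 → ℂ) :
    (((crossMatrix θ).map Complex.ofReal) *ᵥ w) ⬝ᵥ (fun i => (θ i : ℂ)) = 0 := by
  simp [crossMatrix, Matrix.mulVec, dotProduct, Fin.sum_univ_three, Matrix.map_apply]
  ring

lemma cross_ker (θ : Fin 3 → ℝ) (hθ : ∑ i, θ i ^ 2 = 1) (w : Fin 3 → ℂ)
    (h : ((crossMatrix θ).map Complex.ofReal) *ᵥ w = 0) :
    ∀ i, w i = (w ⬝ᵥ (fun i => (θ i : ℂ))) * (θ i : ℂ) := by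
  have h0 := congrFun h 0
  have h1 := congrFun h 1
  have h2 := congrFun h 2
  simp [crossMatrix, Matrix.mulVec, dotProduct, Fin.sum_univ_three, Matrix.map_apply] at h0 h1 h2
  have hθ' : ((θ 0:ℂ))^2 + (θ 1:ℂ)^2 + (θ 2:ℂ)^2 = 1 := by
    rw [Fin.sum_univ_three] at hθ
    exact_mod_cast congrArg (Complex.ofReal) hθ
  have hd : w ⬝ᵥ (fun i => (θ i : ℂ)) = w 0 * (θ 0:ℂ) + w 1 * (θ 1:ℂ) + w 2 * (θ 2:ℂ) := by
    simp [dotProduct, Fin.sum_univ_three]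
  intro i
  rw [hd]
  fin_cases i
  · show w 0 = (w 0 * (θ 0:ℂ) + w 1 * (θ 1:ℂ) + w 2 * (θ 2:ℂ)) * (θ 0:ℂ)
    linear_combination -(w 0) * hθ' - (θ 1:ℂ) * h2 + (θ 2:ℂ) * h1
  · show w 1 = (w 0 * (θ 0:ℂ) + w 1 * (θ 1:ℂ) + w 2 * (θ 2:ℂ)) * (θ 1:ℂ)
    linear_combination -(w 1) * hθ' + (θ 0:ℂ) * h2 - (θ 2:ℂ) * h0
  · show w 2 = (w 0 * (θ 0:ℂ) + w 1 * (θ 1:ℂ) + w 2 * (θ 2:ℂ)) * (θ 2:ℂ)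
    linear_combination -(w 2) * hθ' - (θ 0:ℂ) * h1 + (θ 1:ℂ) * h0

lemma det_identity (m : Matrix (Fin 3) (Fin 3) ℂ) (hm : m.IsSymm) (θ : Fin 3 → ℝ) (γ : ℂ) :
    (γ • m - (crossMatrix θ).map Complex.ofReal).det
      = γ^3 * m.det + γ * ((m *ᵥ (fun i => (θ i:ℂ))) ⬝ᵥ (fun i => (θ i:ℂ))) := by
  have h01 : m 1 0 = m 0 1 := hm.apply 0 1
  have h02 : m 2 0 = m 0 2 := hm.apply 0 2
  have h12 : m 2 1 = m 1 2 := hm.apply 1 2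
  simp [Matrix.det_fin_three, crossMatrix, Matrix.mulVec, dotProduct,
    Fin.sum_univ_three, Matrix.map_apply, Matrix.smul_apply, Matrix.sub_apply, h01, h02, h12]
  ring

lemma dot_symm {n : Type*} [Fintype n] (A : Matrix n n ℂ) (hA : Aᵀ = A) (x y : n → ℂ) :
    (A *ᵥ x) ⬝ᵥ y = x ⬝ᵥ (A *ᵥ y) := by
  rw [dotProduct_comm, dotProduct_mulVec, ← Matrix.mulVec_transpose, hA,
    dotProduct_comm]

/-- the matrix `μ₀^{-1/2} r(θ₀) μ₀^{-1/2}`, restricted to the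
2-dimensional subspace `J⁰_{θ₀} = {μ₀^{1/2} c : ⟨μ₀ c, θ₀⟩ = 0}` of `ℂ³`, has
eigenvalues `± i ⟨μ₀θ₀,θ₀⟩^{1/2} / (det μ₀)^{1/2}`.  Here `s = μ₀^{1/2}`. -/
theorem eigenvalues_on_solenoidal_subspace
    (μ₀ s : Matrix (Fin 3) (Fin 3) ℝ)
    (hμ₀ : μ₀.PosDef) (hμ₀symm : μ₀.IsSymm)
    (hs : s.PosDef) (hssymm : s.IsSymm) (hsq : s * s = μ₀)
    (θ₀ : Fin 3 → ℝ) (hθ₀ : ∑ i, θ₀ i ^ 2 = 1) :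
    let M : Matrix (Fin 3) (Fin 3) ℂ :=
      (s⁻¹ * crossMatrix θ₀ * s⁻¹).map Complex.ofReal;
    let J : Set (Fin 3 → ℂ) :=
      {v | ∃ c : Fin 3 → ℂ, v = (s.map Complex.ofReal) *ᵥ c
        ∧ ((μ₀.map Complex.ofReal) *ᵥ c) ⬝ᵥ (fun i => (θ₀ i : ℂ)) = 0};
    let c₀ : ℝ := Real.sqrt ((μ₀ *ᵥ θ₀) ⬝ᵥ θ₀) / Real.sqrt μ₀.det;
    (∃ v ∈ J, v ≠ 0 ∧ M *ᵥ v = (Complex.I * c₀) • v)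
      ∧ (∃ v ∈ J, v ≠ 0 ∧ M *ᵥ v = (-Complex.I * c₀) • v)
      ∧ ∀ (γ : ℂ) (v : Fin 3 → ℂ), v ∈ J → v ≠ 0 → M *ᵥ v = γ • v →
          γ = Complex.I * c₀ ∨ γ = -Complex.I * c₀ := by
  intro M J c₀
  set θℂ : Fin 3 → ℂ := fun i => (θ₀ i : ℂ) with hθℂ
  set m : Matrix (Fin 3) (Fin 3) ℂ := μ₀.map Complex.ofReal with hmdef
  set σ : Matrix (Fin 3) (Fin 3) ℂ := s.map Complex.ofReal with hσdef
  set R : Matrix (Fin 3) (Fin 3) ℂ := (crossMatrix θ₀).map Complex.ofReal with hRdef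
  -- basic facts
  have hmapmul : ∀ A B : Matrix (Fin 3) (Fin 3) ℝ,
      (A * B).map Complex.ofReal = A.map Complex.ofReal * B.map Complex.ofReal := by
    intro A B
    exact Matrix.map_mul (f := Complex.ofRealHom)
  have hσσ : σ * σ = m := by rw [hσdef, hmdef, ← hmapmul, hsq]
  have hsdet : (0:ℝ) < s.det := hs.det_pos
  have hddet : (0:ℝ) < μ₀.det := hμ₀.det_pos
  have hσdet : σ.det = (s.det : ℂ) := ((RingHom.map_det Complex.ofRealHom s).symm : _)
  have hmdet : m.det = (μ₀.det : ℂ) := ((RingHom.map_det Complex.ofRealHom μ₀).symm : _)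
  have hσdet0 : σ.det ≠ 0 := by rw [hσdet]; exact_mod_cast hsdet.ne'
  have hmdet0 : m.det ≠ 0 := by rw [hmdet]; exact_mod_cast hddet.ne'
  have hσunit : IsUnit σ.det := isUnit_iff_ne_zero.mpr hσdet0
  have hσinv : σ * σ⁻¹ = 1 := Matrix.mul_nonsing_inv σ hσunit
  have hinvσ : σ⁻¹ * σ = 1 := Matrix.nonsing_inv_mul σ hσunit
  have hσsymm : σᵀ = σ := by
    rw [hσdef, ← Matrix.transpose_map, hssymm]
  have hσinvsymm : (σ⁻¹)ᵀ = σ⁻¹ := by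
    rw [Matrix.transpose_nonsing_inv, hσsymm]
  have hmsymm : m.IsSymm := by
    rw [Matrix.IsSymm, hmdef, ← Matrix.transpose_map, hμ₀symm]
  -- M = σ⁻¹ * R * σ⁻¹
  have hsinvmap : (s⁻¹).map Complex.ofReal = σ⁻¹ := by
    have hsunit : IsUnit s.det := isUnit_iff_ne_zero.mpr hsdet.ne'
    have : σ * (s⁻¹).map Complex.ofReal = 1 := by
      rw [hσdef, ← hmapmul, Matrix.mul_nonsing_inv s hsunit]
      ext i j
      simp [Matrix.map_apply, Matrix.one_apply, apply_ite Complex.ofReal]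
    exact (Matrix.inv_eq_right_inv this).symm
  have hM : M = σ⁻¹ * R * σ⁻¹ := by
    show (s⁻¹ * crossMatrix θ₀ * s⁻¹).map Complex.ofReal = _
    rw [hmapmul, hmapmul, hsinvmap, hRdef]
  -- the quadratic form q
  set q : ℝ := (μ₀ *ᵥ θ₀) ⬝ᵥ θ₀ with hqdef
  have hθ₀ne : θ₀ ≠ 0 := by
    intro h
    rw [h] at hθ₀
    simp at hθ₀
  have hqpos : 0 < q := by
    have := hμ₀.dotProduct_mulVec_pos hθ₀ne
    simpa [hqdef, dotProduct_comm] using this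
  have hqℂ : (m *ᵥ θℂ) ⬝ᵥ θℂ = (q : ℂ) := by
    rw [hqdef]
    push_cast
    simp only [hmdef, hθℂ, Matrix.mulVec, dotProduct, Fin.sum_univ_three,
      Matrix.map_apply]
    push_cast
    ring
  -- c₀ facts
  have hc₀pos : 0 < c₀ := div_pos (Real.sqrt_pos.mpr hqpos) (Real.sqrt_pos.mpr hddet)
  have hc₀sq : (c₀:ℝ)^2 * μ₀.det = q := by
    show (Real.sqrt q / Real.sqrt μ₀.det)^2 * μ₀.det = q
    rw [div_pow, Real.sq_sqrt hqpos.le, Real.sq_sqrt hddet.le]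
    field_simp
  have hc : ((c₀:ℂ))^2 * (μ₀.det : ℂ) = (q:ℂ) := by exact_mod_cast congrArg Complex.ofReal hc₀sq
  -- determinant of γ•1 - M
  have hσmσ : σ⁻¹ * m * σ⁻¹ = 1 := by
    rw [← hσσ, ← Matrix.mul_assoc, hinvσ, Matrix.one_mul, hσinv]
  have hdetσσ : m.det = σ.det * σ.det := by rw [← hσσ, Matrix.det_mul]
  have hfact : ∀ γ : ℂ, γ • (1 : Matrix (Fin 3) (Fin 3) ℂ) - M = σ⁻¹ * (γ • m - R) * σ⁻¹ := by
    intro γ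
    rw [hM, Matrix.mul_sub, Matrix.sub_mul, Matrix.mul_smul, Matrix.smul_mul, hσmσ]
  have hdet : ∀ γ : ℂ, (γ • (1 : Matrix (Fin 3) (Fin 3) ℂ) - M).det * m.det
      = γ^3 * m.det + γ * (q:ℂ) := by
    intro γ
    have hid := det_identity m hmsymm θ₀ γ
    rw [hqℂ] at hid
    rw [hfact γ, Matrix.det_mul, Matrix.det_mul, Matrix.det_nonsing_inv, hid, hdetσσ, Ring.inverse_eq_inv']
    field_simp
  -- eigen ⇔ det = 0
  have heig : ∀ γ : ℂ, (∃ v, v ≠ 0 ∧ M *ᵥ v = γ • v)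
      ↔ (γ • (1 : Matrix (Fin 3) (Fin 3) ℂ) - M).det = 0 := by
    intro γ
    rw [← Matrix.exists_mulVec_eq_zero_iff]
    constructor
    · rintro ⟨v, hv, hMv⟩
      refine ⟨v, hv, ?_⟩
      rw [Matrix.sub_mulVec, Matrix.smul_mulVec, Matrix.one_mulVec, hMv, sub_self]
    · rintro ⟨v, hv, hMv⟩
      refine ⟨v, hv, ?_⟩
      rw [Matrix.sub_mulVec, Matrix.smul_mulVec, Matrix.one_mulVec, sub_eq_zero] at hMv
      exact hMv.symm
  -- M always maps into the orthogonal complement of σθ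
  have hMdot : ∀ v : Fin 3 → ℂ, (M *ᵥ v) ⬝ᵥ (σ *ᵥ θℂ) = 0 := by
    intro v
    rw [hM, ← Matrix.mulVec_mulVec, ← Matrix.mulVec_mulVec,
      dot_symm σ⁻¹ hσinvsymm, Matrix.mulVec_mulVec θℂ σ⁻¹ σ, hinvσ, Matrix.one_mulVec, hRdef, hθℂ]
    exact crossdot θ₀ _
  have hmem : ∀ (γ : ℂ) (v : Fin 3 → ℂ), γ ≠ 0 → M *ᵥ v = γ • v → v ∈ J := by
    intro γ v hγ hMv
    refine ⟨σ⁻¹ *ᵥ v, ?_, ?_⟩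
    · rw [Matrix.mulVec_mulVec, hσinv, Matrix.one_mulVec]
    · show (m *ᵥ (σ⁻¹ *ᵥ v)) ⬝ᵥ θℂ = 0
      have h1 : (m *ᵥ (σ⁻¹ *ᵥ v)) ⬝ᵥ θℂ = v ⬝ᵥ (σ *ᵥ θℂ) := by
        rw [Matrix.mulVec_mulVec, ← hσσ, Matrix.mul_assoc, hσinv, Matrix.mul_one,
          dot_symm σ hσsymm]
      rw [h1]
      have h2 : γ * (v ⬝ᵥ (σ *ᵥ θℂ)) = 0 := by
        have h3 := hMdot v
        rw [hMv, smul_dotProduct] at h3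
        simpa using h3
      exact (mul_eq_zero.mp h2).resolve_left hγ
  -- kernel argument: no zero eigenvalue on J
  have hker : ∀ v : Fin 3 → ℂ, v ∈ J → M *ᵥ v = 0 → v = 0 := by
    rintro v ⟨c, hc', hcd⟩ hMv
    have hσc : σ⁻¹ *ᵥ v = c := by
      rw [hc', Matrix.mulVec_mulVec, hinvσ, Matrix.one_mulVec]
    have hRc : R *ᵥ c = 0 := by
      have h4 : σ *ᵥ (M *ᵥ v) = 0 := by rw [hMv]; simp
      rw [hM, ← Matrix.mulVec_mulVec, ← Matrix.mulVec_mulVec, hσc, Matrix.mulVec_mulVec,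
        hσinv, Matrix.one_mulVec] at h4
      exact h4
    have hct := cross_ker θ₀ hθ₀ c hRc
    have hcc : c = (c ⬝ᵥ θℂ) • θℂ := by
      funext i
      rw [Pi.smul_apply, smul_eq_mul]
      exact hct i
    have hcθ : c ⬝ᵥ θℂ = 0 := by
      have h3 : (m *ᵥ c) ⬝ᵥ θℂ = (c ⬝ᵥ θℂ) * (q:ℂ) := by
        rw [← hqℂ]
        conv_lhs => rw [hcc]
        rw [Matrix.mulVec_smul, smul_dotProduct, smul_eq_mul]
      rw [h3] at hcd
      have hq0 : (q:ℂ) ≠ 0 := by exact_mod_cast hqpos.ne'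
      exact (mul_eq_zero.mp hcd).resolve_right hq0
    have hc0 : c = 0 := by
      rw [hcc, hcθ, zero_smul]
    rw [hc', hc0]
    simp
  -- the two eigenvalues satisfy det = 0
  have hroot : ∀ ε : ℂ, ε ^ 2 = -1 →
      ((ε * (c₀:ℂ)) • (1 : Matrix (Fin 3) (Fin 3) ℂ) - M).det = 0 := by
    intro ε hε2
    have hdet' := hdet (ε * (c₀:ℂ))
    have h9 : (ε * (c₀:ℂ))^3 * m.det + (ε * (c₀:ℂ)) * (q:ℂ) = 0 := by
      rw [hmdet]
      linear_combination ε^3 * (c₀:ℂ) * hc + ε * (c₀:ℂ) * (q:ℂ) * hε2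
    rw [h9] at hdet'
    exact (mul_eq_zero.mp hdet').resolve_right hmdet0
  have hc₀0 : ((c₀:ℝ):ℂ) ≠ 0 := by exact_mod_cast hc₀pos.ne'
  have hIsq : Complex.I ^ 2 = -1 := Complex.I_sq
  have hnIsq : (-Complex.I) ^ 2 = -1 := by simp [neg_pow, Complex.I_sq]
  have hpos : ∃ v ∈ J, v ≠ 0 ∧ M *ᵥ v = (Complex.I * (c₀:ℂ)) • v := by
    obtain ⟨v, hv, hMv⟩ := (heig (Complex.I * (c₀:ℂ))).mpr (hroot Complex.I hIsq)
    have hγ : Complex.I * (c₀:ℂ) ≠ 0 := mul_ne_zero Complex.I_ne_zero hc₀0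
    exact ⟨v, hmem _ v hγ hMv, hv, hMv⟩
  have hneg : ∃ v ∈ J, v ≠ 0 ∧ M *ᵥ v = (-Complex.I * (c₀:ℂ)) • v := by
    obtain ⟨v, hv, hMv⟩ := (heig (-Complex.I * (c₀:ℂ))).mpr (hroot (-Complex.I) hnIsq)
    have hγ : -Complex.I * (c₀:ℂ) ≠ 0 :=
      mul_ne_zero (neg_ne_zero.mpr Complex.I_ne_zero) hc₀0
    exact ⟨v, hmem _ v hγ hMv, hv, hMv⟩
  refine ⟨hpos, hneg, ?_⟩
  intro γ v hvJ hv hMv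
  by_cases hγ0 : γ = 0
  · exfalso
    apply hv
    apply hker v hvJ
    rw [hMv, hγ0, zero_smul]
  · have hdet0 : (γ • (1 : Matrix (Fin 3) (Fin 3) ℂ) - M).det = 0 :=
      (heig γ).mp ⟨v, hv, hMv⟩
    have h4 : γ^3 * m.det + γ * (q:ℂ) = 0 := by
      rw [← hdet γ, hdet0, zero_mul]
    have h6 : γ * (γ^2 * (μ₀.det:ℂ) + (q:ℂ)) = 0 := by
      rw [hmdet] at h4
      linear_combination h4
    have h7 : γ^2 * (μ₀.det:ℂ) + (q:ℂ) = 0 := (mul_eq_zero.mp h6).resolve_left hγ0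
    have hd0 : (μ₀.det:ℂ) ≠ 0 := by exact_mod_cast hddet.ne'
    have h5' : (γ^2 + ((c₀:ℂ))^2) * (μ₀.det:ℂ) = 0 := by linear_combination h7 + hc
    have h5 : γ^2 = -((c₀:ℂ))^2 := by
      have := (mul_eq_zero.mp h5').resolve_right hd0
      linear_combination this
    have h8 : (γ - Complex.I * (c₀:ℂ)) * (γ + Complex.I * (c₀:ℂ)) = 0 := by
      linear_combination h5 - ((c₀:ℂ))^2 * hIsq
    rcases mul_eq_zero.mp h8 with h | h
    · left
      linear_combination h
    · right
      rw [neg_mul]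
      linear_combination h
end
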